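/- For fixed z ≥ 0 and t > 0, the Ogata–Banks concentration C(z,t; R) is a nonincreasing function of the retardation factor R on [1, ∞) when v ≥ 0: larger retardation yields lower concentration at given depth and time. -/

import Mathlib

/-- The complementary error function `erfc x = (2/√π) ∫ₓ^∞ e^{-s²} ds`. -/
noncomputable def erfc (x : ℝ) : ℝ :=
  (2 / Real.sqrt Real.pi) * ∫ s in Set.Ioi x, Real.exp (-s ^ 2)

/-- The Ogata–Banks analytical solution of the advection–diffusion–retardation
equation. -/
noncomputable def ogataBanks (C0 v D R z t : ℝ) : ℝ :=
  (C0 / 2) * (erfc ((R * z - v * t) / (2 * Real.sqrt (R * D * t))) +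
    Real.exp (v * z / D) * erfc ((R * z + v * t) / (2 * Real.sqrt (R * D * t))))

lemma cont_gauss : Continuous fun s : ℝ => Real.exp (-s ^ 2) := by continuity

lemma integrable_gauss : MeasureTheory.Integrable fun s : ℝ => Real.exp (-s ^ 2) := by
  simpa using integrable_exp_neg_mul_sq (one_pos)

lemma hasDerivAt_gaussIoi (x : ℝ) :
    HasDerivAt (fun y : ℝ => ∫ s in Set.Ioi y, Real.exp (-s ^ 2)) (-(Real.exp (-x ^ 2))) x := by
  have hrw : (fun y : ℝ => ∫ s in Set.Ioi y, Real.exp (-s ^ 2)) =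
      fun y : ℝ => (∫ s in Set.Ioi (0:ℝ), Real.exp (-s ^ 2)) -
        ∫ s in (0:ℝ)..y, Real.exp (-s ^ 2) := by
    funext y
    have h0 := intervalIntegral.integral_Iic_add_Ioi (μ := MeasureTheory.volume)
      (b := (0:ℝ)) integrable_gauss.integrableOn integrable_gauss.integrableOn
    have hy := intervalIntegral.integral_Iic_add_Ioi (μ := MeasureTheory.volume)
      (b := y) integrable_gauss.integrableOn integrable_gauss.integrableOn
    have hI := intervalIntegral.integral_Iic_sub_Iic (μ := MeasureTheory.volume)
      (a := (0:ℝ)) (b := y) integrable_gauss.integrableOn integrable_gauss.integrableOn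
    linarith
  rw [hrw]
  exact (intervalIntegral.integral_hasDerivAt_right
    (integrable_gauss.intervalIntegrable)
    (cont_gauss.stronglyMeasurableAtFilter _ _)
    cont_gauss.continuousAt).const_sub _

lemma hasDerivAt_erfc (x : ℝ) :
    HasDerivAt erfc ((2 / Real.sqrt Real.pi) * (-(Real.exp (-x ^ 2)))) x :=
  (hasDerivAt_gaussIoi x).const_mul _

/-- For fixed `z ≥ 0` and `t > 0`, the Ogata–Banks concentration is nonincreasing
in the retardation factor `R` on `[1, ∞)`. -/
theorem ogata_banks_antitone_in_retardation (C0 v D z t : ℝ)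
    (hC0 : 0 < C0) (hv : 0 ≤ v) (hD : 0 < D) (hz : 0 ≤ z) (ht : 0 < t) :
    AntitoneOn (fun R => ogataBanks C0 v D R z t) (Set.Ici 1) := by
  set s := Real.sqrt (D * t) with hs_def
  have hDt : 0 < D * t := mul_pos hD ht
  have hs : 0 < s := Real.sqrt_pos.mpr hDt
  have hs2 : s ^ 2 = D * t := Real.sq_sqrt hDt.le
  set c1 := z / (2 * s) with hc1_def
  set c2 := v * t / (2 * s) with hc2_def
  have hc1 : 0 ≤ c1 := by positivity
  have hc2 : 0 ≤ c2 := by positivity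
  set K := Real.exp (v * z / D) with hK_def
  set G : ℝ → ℝ := fun u =>
    (C0 / 2) * (erfc (c1 * u - c2 * u⁻¹) + K * erfc (c1 * u + c2 * u⁻¹)) with hG_def
  -- derivative of G at u > 0
  have hderiv : ∀ u : ℝ, 0 < u → HasDerivAt G
      ((C0 / 2) * (((2 / Real.sqrt Real.pi) * (-(Real.exp (-(c1 * u - c2 * u⁻¹) ^ 2)))) *
          (c1 * 1 - c2 * (-(u ^ 2)⁻¹)) +
        K * (((2 / Real.sqrt Real.pi) * (-(Real.exp (-(c1 * u + c2 * u⁻¹) ^ 2)))) *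
          (c1 * 1 + c2 * (-(u ^ 2)⁻¹))))) u := by
    intro u hu
    have hA : HasDerivAt (fun u : ℝ => c1 * u - c2 * u⁻¹)
        (c1 * 1 - c2 * (-(u ^ 2)⁻¹)) u :=
      ((hasDerivAt_id u).const_mul c1).sub ((hasDerivAt_inv hu.ne').const_mul c2)
    have hB : HasDerivAt (fun u : ℝ => c1 * u + c2 * u⁻¹)
        (c1 * 1 + c2 * (-(u ^ 2)⁻¹)) u :=
      ((hasDerivAt_id u).const_mul c1).add ((hasDerivAt_inv hu.ne').const_mul c2)
    exact (((hasDerivAt_erfc _).comp u hA).add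
      (((hasDerivAt_erfc _).comp u hB).const_mul K)).const_mul _
  -- key exponential identity
  have hexp : ∀ u : ℝ, 0 < u →
      K * Real.exp (-(c1 * u + c2 * u⁻¹) ^ 2) = Real.exp (-(c1 * u - c2 * u⁻¹) ^ 2) := by
    intro u hu
    rw [hK_def, ← Real.exp_add]
    congr 1
    have h4 : v * z / D = 4 * c1 * c2 := by
      rw [hc1_def, hc2_def]
      field_simp
      linear_combination (4 * v * z) * hs2
    have hu2 : u * u⁻¹ = 1 := mul_inv_cancel₀ hu.ne'
    nlinarith [hu2, h4]
  -- G is antitone on [1, ∞)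
  have hGanti : AntitoneOn G (Set.Ici (1:ℝ)) := by
    apply antitoneOn_of_deriv_nonpos (convex_Ici 1)
    · intro u hu
      exact ((hderiv u (lt_of_lt_of_le one_pos hu)).continuousAt).continuousWithinAt
    · intro u hu
      rw [interior_Ici] at hu
      exact ((hderiv u (lt_trans one_pos hu)).differentiableAt).differentiableWithinAt
    · intro u hu
      rw [interior_Ici] at hu
      have hu0 : 0 < u := lt_trans one_pos hu
      rw [(hderiv u hu0).deriv]
      have hE := hexp u hu0
      have hEpos := Real.exp_pos (-(c1 * u - c2 * u⁻¹) ^ 2)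
      have hBpos := Real.exp_pos (-(c1 * u + c2 * u⁻¹) ^ 2)
      have hπ : 0 < Real.sqrt Real.pi := Real.sqrt_pos.mpr Real.pi_pos
      have hu2 : 0 < (u ^ 2)⁻¹ := by positivity
      have hkey : (((2 / Real.sqrt Real.pi) * (-(Real.exp (-(c1 * u - c2 * u⁻¹) ^ 2)))) *
          (c1 * 1 - c2 * (-(u ^ 2)⁻¹)) +
        K * (((2 / Real.sqrt Real.pi) * (-(Real.exp (-(c1 * u + c2 * u⁻¹) ^ 2)))) *
          (c1 * 1 + c2 * (-(u ^ 2)⁻¹)))) =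
          -(2 / Real.sqrt Real.pi) * (2 * c1) * Real.exp (-(c1 * u - c2 * u⁻¹) ^ 2) := by
        have : K * Real.exp (-(c1 * u + c2 * u⁻¹) ^ 2) =
            Real.exp (-(c1 * u - c2 * u⁻¹) ^ 2) := hE
        linear_combination (-(2 / Real.sqrt Real.pi) * (c1 * 1 + c2 * (-(u ^ 2)⁻¹))) * this
      rw [hkey]
      have : 0 ≤ (2 / Real.sqrt Real.pi) * (2 * c1) * Real.exp (-(c1 * u - c2 * u⁻¹) ^ 2) := by
        positivity
      nlinarith
  -- rewrite ogataBanks via G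
  have hOB : ∀ R : ℝ, 1 ≤ R → ogataBanks C0 v D R z t = G (Real.sqrt R) := by
    intro R hR
    have hR0 : (0:ℝ) ≤ R := le_trans zero_le_one hR
    set r := Real.sqrt R with hr_def
    have hr : 0 < r := Real.sqrt_pos.mpr (lt_of_lt_of_le one_pos hR)
    have hr2 : r ^ 2 = R := Real.sq_sqrt hR0
    have hsqrt : Real.sqrt (R * D * t) = r * s := by
      rw [hr_def, hs_def, mul_assoc, Real.sqrt_mul hR0]
    rw [hG_def]
    simp only [ogataBanks]
    rw [hsqrt]
    have h1 : (R * z - v * t) / (2 * (r * s)) = c1 * r - c2 * r⁻¹ := by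
      rw [hc1_def, hc2_def]
      field_simp
      linear_combination (-z) * hr2
    have h2 : (R * z + v * t) / (2 * (r * s)) = c1 * r + c2 * r⁻¹ := by
      rw [hc1_def, hc2_def]
      field_simp
      linear_combination (-z) * hr2
    rw [h1, h2]
  -- conclude
  intro R1 hR1 R2 hR2 h12
  show ogataBanks C0 v D R2 z t ≤ ogataBanks C0 v D R1 z t
  rw [hOB R1 hR1, hOB R2 hR2]
  exact hGanti (Set.mem_Ici.mpr (by
      calc (1:ℝ) = Real.sqrt 1 := (Real.sqrt_one).symm
      _ ≤ Real.sqrt R1 := Real.sqrt_le_sqrt hR1))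
    (Set.mem_Ici.mpr (by
      calc (1:ℝ) = Real.sqrt 1 := (Real.sqrt_one).symm
      _ ≤ Real.sqrt R2 := Real.sqrt_le_sqrt hR2))
    (Real.sqrt_le_sqrt h12)
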